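/- For G = SO(n) acting on ℝⁿ by rotations, the quotient distance is d_Q([x],[y]) = | ‖x‖ − ‖y‖ |, the map s([x]) = ‖x‖·v for a fixed unit vector v is a congruent section, and for the generative model Y = Φ·t₀ + σε the consistency bias equals | E(‖Y‖) − ‖t₀‖ |. -/

import Mathlib

open MeasureTheory ProbabilityTheory RealInnerProductSpace

/-- The rotation group `SO(n)`. -/
abbrev SOn (n : ℕ) := Matrix.specialOrthogonalGroup (Fin n) ℝ

/-- The natural action of `SO(n)` on `ℝⁿ`. -/
noncomputable def soAct {n : ℕ} (R : SOn n) (x : EuclideanSpace ℝ (Fin n)) :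
    EuclideanSpace ℝ (Fin n) :=
  (EuclideanSpace.equiv (Fin n) ℝ).symm
    ((R : Matrix (Fin n) (Fin n) ℝ).mulVec (EuclideanSpace.equiv (Fin n) ℝ x))

namespace SO17aux

open Matrix

variable {n : ℕ}

lemma soAct_def (R : SOn n) (x : EuclideanSpace ℝ (Fin n)) :
    soAct R x = (WithLp.equiv 2 _).symm ((R : Matrix (Fin n) (Fin n) ℝ) *ᵥ (WithLp.equiv 2 _ x)) := rfl

lemma inner_eq_dot (x y : EuclideanSpace ℝ (Fin n)) :
    ⟪x, y⟫ = dotProduct (WithLp.equiv 2 _ x) (WithLp.equiv 2 _ y) := by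
  simpa [dotProduct_comm] using EuclideanSpace.inner_eq_star_dotProduct x y

lemma dot_self_eq (x : EuclideanSpace ℝ (Fin n)) :
    dotProduct (WithLp.equiv 2 _ x) (WithLp.equiv 2 _ x) = ‖x‖ ^ 2 := by
  rw [← inner_eq_dot, real_inner_self_eq_norm_sq]

lemma norm_soAct (R : SOn n) (x : EuclideanSpace ℝ (Fin n)) : ‖soAct R x‖ = ‖x‖ := by
  have hmem := (Matrix.mem_specialOrthogonalGroup_iff.mp R.2).1
  have h1 : (R : Matrix (Fin n) (Fin n) ℝ)ᵀ * R = 1 := by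
    have := Matrix.mem_unitaryGroup_iff'.mp hmem
    simpa [Matrix.star_eq_conjTranspose] using this
  have h2 : ‖soAct R x‖ ^ 2 = ‖x‖ ^ 2 := by
    rw [← dot_self_eq, ← dot_self_eq, soAct_def]
    simp only [Equiv.apply_symm_apply]
    rw [Matrix.dotProduct_mulVec, Matrix.vecMul_mulVec, h1, Matrix.vecMul_one]
  nlinarith [norm_nonneg (soAct R x), norm_nonneg x, h2]

noncomputable def rf (d : Fin n → ℝ) : Matrix (Fin n) (Fin n) ℝ :=
  1 - (2 / (d ⬝ᵥ d)) • vecMulVec d d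

lemma vecMulVec_mulVec' (d x : Fin n → ℝ) : vecMulVec d d *ᵥ x = (d ⬝ᵥ x) • d := by
  ext i
  simp only [Matrix.mulVec, dotProduct, vecMulVec_apply, Pi.smul_apply, smul_eq_mul,
    Finset.sum_mul]
  exact Finset.sum_congr rfl fun j _ => by ring

lemma vecMulVec_mul_self (d : Fin n → ℝ) :
    vecMulVec d d * vecMulVec d d = (d ⬝ᵥ d) • vecMulVec d d := by
  ext i j
  simp only [Matrix.mul_apply, vecMulVec_apply, Matrix.smul_apply, dotProduct,
    smul_eq_mul, Finset.sum_mul]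
  exact Finset.sum_congr rfl fun k _ => by ring

lemma rf_mulVec (d x : Fin n → ℝ) :
    rf d *ᵥ x = x - (2 * (d ⬝ᵥ x) / (d ⬝ᵥ d)) • d := by
  rw [rf, Matrix.sub_mulVec, Matrix.one_mulVec, Matrix.smul_mulVec, vecMulVec_mulVec',
    smul_smul]
  ring_nf

lemma rf_mul_self {d : Fin n → ℝ} (hd : d ≠ 0) : rf d * rf d = 1 := by
  have hs : d ⬝ᵥ d ≠ 0 := by
    rwa [ne_eq, dotProduct_self_eq_zero]
  simp only [rf, sub_mul, mul_sub, one_mul, mul_one, Matrix.smul_mul, Matrix.mul_smul,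
    vecMulVec_mul_self, smul_smul]
  have h : 2 / (d ⬝ᵥ d) * (2 / (d ⬝ᵥ d) * (d ⬝ᵥ d)) = 2 / (d ⬝ᵥ d) + 2 / (d ⬝ᵥ d) := by
    field_simp; ring
  rw [h]
  module

lemma rf_transpose (d : Fin n → ℝ) : (rf d)ᵀ = rf d := by
  rw [rf, Matrix.transpose_sub, Matrix.transpose_one, Matrix.transpose_smul]
  congr 1
  ext i j
  simp [vecMulVec_apply, mul_comm]

lemma rf_mem {d : Fin n → ℝ} (hd : d ≠ 0) : rf d ∈ orthogonalGroup (Fin n) ℝ := by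
  rw [Matrix.mem_unitaryGroup_iff']
  simpa [Matrix.star_eq_conjTranspose, rf_transpose] using rf_mul_self hd

lemma rf_det {d : Fin n → ℝ} (hd : d ≠ 0) : (rf d).det = -1 := by
  have hs : d ⬝ᵥ d ≠ 0 := by rwa [ne_eq, dotProduct_self_eq_zero]
  have h : rf d = 1 + replicateCol Unit ((-(2 / (d ⬝ᵥ d))) • d) * replicateRow Unit d := by
    rw [← vecMulVec_eq]
    ext i j
    simp only [rf, Matrix.sub_apply, Matrix.add_apply, Matrix.smul_apply, vecMulVec_apply,
      Pi.smul_apply, smul_eq_mul]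
    ring
  rw [h, det_one_add_replicateCol_mul_replicateRow]
  have : d ⬝ᵥ (-(2 / (d ⬝ᵥ d)) • d) = -2 := by
    rw [dotProduct_smul, smul_eq_mul]
    field_simp
  rw [this]; norm_num

lemma exists_perp (hn : 2 ≤ n) (w : EuclideanSpace ℝ (Fin n)) :
    ∃ z : EuclideanSpace ℝ (Fin n), z ≠ 0 ∧ ⟪w, z⟫ = 0 := by
  have hne : ((ℝ ∙ w)ᗮ : Submodule ℝ (EuclideanSpace ℝ (Fin n))) ≠ ⊥ := by
    intro hbot
    have h1 : Module.finrank ℝ (ℝ ∙ w) + Module.finrank ℝ ((ℝ ∙ w)ᗮ) = n := by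
      rw [Submodule.finrank_add_finrank_orthogonal, finrank_euclideanSpace_fin]
    have h2 : Module.finrank ℝ (ℝ ∙ w) ≤ 1 := by
      by_cases hw : w = 0
      · rw [hw, Submodule.span_zero_singleton, finrank_bot]; norm_num
      · rw [finrank_span_singleton hw]
    rw [hbot, finrank_bot] at h1
    omega
  obtain ⟨z, hzmem, hz0⟩ := Submodule.exists_mem_ne_zero_of_ne_bot hne
  exact ⟨z, hz0, (Submodule.mem_orthogonal _ _).mp hzmem w (Submodule.mem_span_singleton_self w)⟩

lemma exists_so (hn : 2 ≤ n) (x w : EuclideanSpace ℝ (Fin n)) (hnorm : ‖w‖ = ‖x‖) :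
    ∃ R : SOn n, soAct R x = w := by
  by_cases hxw : x = w
  · refine ⟨1, ?_⟩
    simp [soAct_def, Matrix.one_mulVec, hxw]
  · set x' : Fin n → ℝ := WithLp.equiv 2 _ x with hx'
    set w' : Fin n → ℝ := WithLp.equiv 2 _ w with hw'
    set d : Fin n → ℝ := x' - w' with hdd
    have hd : d ≠ 0 := by
      rw [hdd, sub_ne_zero]
      exact fun h => hxw ((WithLp.equiv 2 _).injective h)
    have hdot : d ⬝ᵥ d = 2 * (d ⬝ᵥ x') := by
      have hx2 : x' ⬝ᵥ x' = ‖x‖ ^ 2 := dot_self_eq x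
      have hw2 : w' ⬝ᵥ w' = ‖x‖ ^ 2 := by rw [dot_self_eq w, hnorm]
      have hcomm : w' ⬝ᵥ x' = x' ⬝ᵥ w' := dotProduct_comm _ _
      simp only [hdd, sub_dotProduct, dotProduct_sub]
      rw [hx2, hw2, hcomm]; ring
    have hds : d ⬝ᵥ d ≠ 0 := by rwa [ne_eq, dotProduct_self_eq_zero]
    have h1 : rf d *ᵥ x' = w' := by
      rw [rf_mulVec, hdot]
      have hdx : d ⬝ᵥ x' ≠ 0 := by
        intro h; rw [h, mul_zero] at hdot; exact hds hdot
      rw [div_self (mul_ne_zero two_ne_zero hdx), one_smul]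
      rw [hdd]; abel
    obtain ⟨z, hz0, hzw⟩ := exists_perp hn w
    set z' : Fin n → ℝ := WithLp.equiv 2 _ z with hz'
    have hz0' : z' ≠ 0 := by
      intro h
      exact hz0 ((WithLp.equiv 2 _).injective (by rw [← hz', h]; simp))
    have hzw' : z' ⬝ᵥ w' = 0 := by
      rw [hz', hw', ← inner_eq_dot z w, real_inner_comm]
      exact hzw
    have h2 : rf z' *ᵥ w' = w' := by
      rw [rf_mulVec, hzw']
      simp
    refine ⟨⟨rf z' * rf d, Matrix.mem_specialOrthogonalGroup_iff.mpr
      ⟨mul_mem (rf_mem hz0') (rf_mem hd), by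
        rw [Matrix.det_mul, rf_det hz0', rf_det hd]; norm_num⟩⟩, ?_⟩
    rw [soAct_def]
    show (WithLp.equiv 2 _).symm ((rf z' * rf d) *ᵥ x') = w
    rw [← Matrix.mulVec_mulVec, h1, h2]
    exact (WithLp.equiv 2 _).symm_apply_apply w

lemma exists_min (hn : 2 ≤ n) (x y : EuclideanSpace ℝ (Fin n)) :
    ∃ R₀ : SOn n, ‖x - soAct R₀ y‖ = |‖x‖ - ‖y‖| := by
  by_cases hx : x = 0
  · refine ⟨1, ?_⟩
    have h1 : ‖soAct 1 y‖ = ‖y‖ := norm_soAct 1 y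
    rw [hx]
    simp only [zero_sub, norm_neg, norm_zero, zero_sub, abs_neg, abs_norm, h1]
  · have hx0 : (0:ℝ) < ‖x‖ := norm_pos_iff.mpr hx
    obtain ⟨R₀, hR₀⟩ := exists_so hn y ((‖y‖ / ‖x‖) • x) (by
      rw [norm_smul, Real.norm_eq_abs, abs_of_nonneg (div_nonneg (norm_nonneg y) (norm_nonneg x))]
      field_simp)
    refine ⟨R₀, ?_⟩
    rw [hR₀]
    have h2 : x - (‖y‖ / ‖x‖) • x = (1 - ‖y‖ / ‖x‖) • x := by
      rw [sub_smul, one_smul]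
    rw [h2, norm_smul, Real.norm_eq_abs, ← abs_of_nonneg (le_of_lt hx0), ← abs_mul]
    congr 1
    field_simp
    simp only [abs_norm]; ring

lemma bdd (x y : EuclideanSpace ℝ (Fin n)) :
    BddBelow (Set.range fun R : SOn n => ‖x - soAct R y‖) := by
  refine ⟨0, ?_⟩
  rintro _ ⟨R, rfl⟩
  positivity

lemma bdd_sq (x y : EuclideanSpace ℝ (Fin n)) :
    BddBelow (Set.range fun R : SOn n => ‖x - soAct R y‖ ^ 2) := by
  refine ⟨0, ?_⟩
  rintro _ ⟨R, rfl⟩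
  positivity

lemma inf_eq (hn : 2 ≤ n) (x y : EuclideanSpace ℝ (Fin n)) :
    (⨅ R : SOn n, ‖x - soAct R y‖) = |‖x‖ - ‖y‖| := by
  obtain ⟨R₀, hR₀⟩ := exists_min hn x y
  apply le_antisymm
  · rw [← hR₀]
    exact ciInf_le (bdd x y) R₀
  · refine le_ciInf fun R => ?_
    calc |‖x‖ - ‖y‖| = |‖x‖ - ‖soAct R y‖| := by rw [norm_soAct]
    _ ≤ ‖x - soAct R y‖ := abs_norm_sub_norm_le _ _

lemma inf_sq_eq (hn : 2 ≤ n) (x y : EuclideanSpace ℝ (Fin n)) :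
    (⨅ R : SOn n, ‖x - soAct R y‖ ^ 2) = (‖x‖ - ‖y‖) ^ 2 := by
  obtain ⟨R₀, hR₀⟩ := exists_min hn x y
  apply le_antisymm
  · have : ‖x - soAct R₀ y‖ ^ 2 = (‖x‖ - ‖y‖) ^ 2 := by rw [hR₀, sq_abs]
    rw [← this]
    exact ciInf_le (bdd_sq x y) R₀
  · refine le_ciInf fun R => ?_
    have h1 : |‖x‖ - ‖y‖| ≤ ‖x - soAct R y‖ := by
      calc |‖x‖ - ‖y‖| = |‖x‖ - ‖soAct R y‖| := by rw [norm_soAct]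
      _ ≤ ‖x - soAct R y‖ := abs_norm_sub_norm_le _ _
    calc (‖x‖ - ‖y‖) ^ 2 = |‖x‖ - ‖y‖| ^ 2 := by rw [sq_abs]
    _ ≤ ‖x - soAct R y‖ ^ 2 := by
        exact pow_le_pow_left₀ (abs_nonneg _) h1 2

end SO17aux

open SO17aux

/-- For `SO(n)` acting on `ℝⁿ` by rotations: the quotient distance equals
`|‖x‖ - ‖y‖|`; `s([x]) = ‖x‖·v` (for a fixed unit vector `v`) is a congruent
section; and in the generative model `Y = Φ·t₀ + σε` the consistency bias of
any Fréchet mean equals `|E(‖Y‖) - ‖t₀‖|`. -/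
theorem stmt17 {n : ℕ} (hn : 2 ≤ n)
    {Ω : Type*} [MeasureSpace Ω] [IsProbabilityMeasure (ℙ : Measure Ω)]
    (t₀ : EuclideanSpace ℝ (Fin n)) (σ : ℝ)
    (Φ : Ω → SOn n) (ε : Ω → EuclideanSpace ℝ (Fin n))
    (hint : Integrable ε) (hmean : (∫ ω, ε ω) = 0)
    (v : EuclideanSpace ℝ (Fin n)) (hv : ‖v‖ = 1)
    (hY1 : Integrable (fun ω => ‖soAct (Φ ω) t₀ + σ • ε ω‖))
    (hY2 : Integrable (fun ω => ‖soAct (Φ ω) t₀ + σ • ε ω‖ ^ 2))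
    (hFint : ∀ x : EuclideanSpace ℝ (Fin n),
      Integrable (fun ω =>
        ⨅ R : SOn n, ‖x - soAct R (soAct (Φ ω) t₀ + σ • ε ω)‖ ^ 2)) :
    (∀ x y : EuclideanSpace ℝ (Fin n),
      (⨅ R : SOn n, ‖x - soAct R y‖) = |‖x‖ - ‖y‖|) ∧
    (∀ x : EuclideanSpace ℝ (Fin n), ∃ R : SOn n, soAct R x = ‖x‖ • v) ∧
    (∀ x y : EuclideanSpace ℝ (Fin n),
      ‖(‖x‖ • v : EuclideanSpace ℝ (Fin n)) - ‖y‖ • v‖ =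
        ⨅ R : SOn n, ‖x - soAct R y‖) ∧
    (∀ mstar : EuclideanSpace ℝ (Fin n),
      (∀ x, (∫ ω, ⨅ R : SOn n,
            ‖mstar - soAct R (soAct (Φ ω) t₀ + σ • ε ω)‖ ^ 2) ≤
          ∫ ω, ⨅ R : SOn n, ‖x - soAct R (soAct (Φ ω) t₀ + σ • ε ω)‖ ^ 2) →
      (⨅ R : SOn n, ‖t₀ - soAct R mstar‖) =
        |(∫ ω, ‖soAct (Φ ω) t₀ + σ • ε ω‖) - ‖t₀‖|) := by
  refine ⟨inf_eq hn, ?_, ?_, ?_⟩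
  · intro x
    exact exists_so hn x (‖x‖ • v) (by
      rw [norm_smul, Real.norm_eq_abs, abs_norm, hv, mul_one])
  · intro x y
    rw [inf_eq hn, ← sub_smul, norm_smul, Real.norm_eq_abs, hv, mul_one]
  · intro mstar hmin
    set Y : Ω → EuclideanSpace ℝ (Fin n) := fun ω => soAct (Φ ω) t₀ + σ • ε ω with hY
    set μ : ℝ := ∫ ω, ‖Y ω‖ with hμ
    have hμ0 : 0 ≤ μ := integral_nonneg fun ω => norm_nonneg _
    have hF : ∀ m : EuclideanSpace ℝ (Fin n),
        (∫ ω, ⨅ R : SOn n, ‖m - soAct R (Y ω)‖ ^ 2)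
          = ‖m‖ ^ 2 - 2 * ‖m‖ * μ + ∫ ω, ‖Y ω‖ ^ 2 := by
      intro m
      have h1 : (fun ω => ⨅ R : SOn n, ‖m - soAct R (Y ω)‖ ^ 2)
          = fun ω => ‖m‖ ^ 2 - 2 * ‖m‖ * ‖Y ω‖ + ‖Y ω‖ ^ 2 := by
        funext ω
        rw [inf_sq_eq hn]
        ring
      have hInt1 : Integrable (fun ω => 2 * ‖m‖ * ‖Y ω‖) := hY1.const_mul _
      have hInt2 : Integrable (fun ω => ‖m‖ ^ 2 - 2 * ‖m‖ * ‖Y ω‖) :=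
        (integrable_const _).sub hInt1
      rw [h1, integral_add hInt2 hY2, integral_sub (integrable_const _) hInt1,
        integral_const, integral_const_mul]
      simp [measure_univ]
      rfl
    have key := hmin (μ • v)
    rw [hF mstar, hF (μ • v)] at key
    have hμv : ‖μ • v‖ = μ := by
      rw [norm_smul, Real.norm_eq_abs, hv, mul_one, abs_of_nonneg hμ0]
    rw [hμv] at key
    have hms : ‖mstar‖ = μ := by nlinarith [sq_nonneg (‖mstar‖ - μ)]
    rw [inf_eq hn, hms, abs_sub_comm]
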